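/- Assume s ≠ (0,…,0,s_d), i.e., q is not the zero polynomial. Then the polynomial z·v(z) − u(z) has degree at most (d−1)² + 1. Moreover, if x = (x₁,x₂) with x₁ ≠ 0 satisfies F(x) = conj(x) ≠ 0, then z = x₂/x₁ satisfies z·v(z) − u(z) = 0 and v(z) ≠ 0. -/

import Mathlib

noncomputable section

section helpers
lemma gen_eval (d : ℕ) (c : ℕ → ℂ) (x₁ x₂ : ℂ) (hx₁ : x₁ ≠ 0) :
    x₁ ^ (d - 1) * (∑ j ∈ Finset.range d, Polynomial.C (c j) * Polynomial.X ^ j).eval (x₂ / x₁) =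
    ∑ j ∈ Finset.range d, c j * x₁ ^ (d - 1 - j) * x₂ ^ j := by
  simp only [Polynomial.eval_finset_sum, Polynomial.eval_mul, Polynomial.eval_C, Polynomial.eval_pow, Polynomial.eval_X, Finset.mul_sum]
  refine Finset.sum_congr rfl fun j hj => ?_
  have hj' := Finset.mem_range.mp hj
  have hsplit : x₁ ^ (d - 1) = x₁ ^ (d - 1 - j) * x₁ ^ j := by
    rw [← pow_add]; congr 1; omega
  rw [hsplit, div_pow]
  field_simp

lemma gen2 (d : ℕ) (c : ℕ → ℂ) (P Q : Polynomial ℂ) (z A B y : ℂ)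
    (hA : y * P.eval z = A) (hB : y * Q.eval z = B) :
    y ^ (d - 1) * (∑ j ∈ Finset.range d, Polynomial.C (c j) * P ^ j * Q ^ (d - 1 - j)).eval z =
    ∑ j ∈ Finset.range d, c j * A ^ j * B ^ (d - 1 - j) := by
  simp only [Polynomial.eval_finset_sum, Polynomial.eval_mul, Polynomial.eval_C, Polynomial.eval_pow, Finset.mul_sum]
  refine Finset.sum_congr rfl fun j hj => ?_
  have hj' := Finset.mem_range.mp hj
  have h : j + (d - 1 - j) = d - 1 := by omega
  have hy : y ^ (d - 1) = y ^ j * y ^ (d - 1 - j) := by rw [← pow_add, h]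
  rw [← hA, ← hB, mul_pow, mul_pow, hy]
  ring
end helpers

/-- `p(z) = Σ_{j=0}^{d-1} C(d-1,j) s_{j+1} z^j`. -/
def pP (d : ℕ) (s : ℕ → ℂ) : Polynomial ℂ :=
  ∑ j ∈ Finset.range d, Polynomial.C (((d - 1).choose j : ℂ) * s (j + 1)) * Polynomial.X ^ j

/-- `q(z) = Σ_{j=0}^{d-1} C(d-1,j) s_j z^j`. -/
def qP (d : ℕ) (s : ℕ → ℂ) : Polynomial ℂ :=
  ∑ j ∈ Finset.range d, Polynomial.C (((d - 1).choose j : ℂ) * s j) * Polynomial.X ^ j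

/-- First component of `F = (1/d)∇f`, `F₁(x₁,x₂) = Σ_{j=0}^{d-1} C(d-1,j) s_j x₁^{d-1-j} x₂^j`. -/
def F1 (d : ℕ) (s : ℕ → ℂ) (x₁ x₂ : ℂ) : ℂ :=
  ∑ j ∈ Finset.range d, ((d - 1).choose j : ℂ) * s j * x₁ ^ (d - 1 - j) * x₂ ^ j

/-- Second component of `F = (1/d)∇f`,
`F₂(x₁,x₂) = Σ_{j=0}^{d-1} C(d-1,j) s_{j+1} x₁^{d-1-j} x₂^j`. -/
def F2 (d : ℕ) (s : ℕ → ℂ) (x₁ x₂ : ℂ) : ℂ :=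
  ∑ j ∈ Finset.range d, ((d - 1).choose j : ℂ) * s (j + 1) * x₁ ^ (d - 1 - j) * x₂ ^ j

/-- `u(z) = Σ_{j=0}^{d-1} C(d-1,j) conj(s_{j+1}) p(z)^j q(z)^{d-1-j}`. -/
def uP (d : ℕ) (s : ℕ → ℂ) : Polynomial ℂ :=
  ∑ j ∈ Finset.range d, Polynomial.C (((d - 1).choose j : ℂ) * (starRingEnd ℂ) (s (j + 1))) *
    (pP d s) ^ j * (qP d s) ^ (d - 1 - j)

/-- `v(z) = Σ_{j=0}^{d-1} C(d-1,j) conj(s_j) p(z)^j q(z)^{d-1-j}`. -/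
def vP (d : ℕ) (s : ℕ → ℂ) : Polynomial ℂ :=
  ∑ j ∈ Finset.range d, Polynomial.C (((d - 1).choose j : ℂ) * (starRingEnd ℂ) (s j)) *
    (pP d s) ^ j * (qP d s) ^ (d - 1 - j)

lemma pP_deg (d : ℕ) (s : ℕ → ℂ) : (pP d s).natDegree ≤ d - 1 := by
  apply Polynomial.natDegree_sum_le_of_forall_le
  intro j hj
  have hj' := Finset.mem_range.mp hj
  refine (Polynomial.natDegree_C_mul_le _ _).trans ?_
  rw [Polynomial.natDegree_X_pow]; omega

lemma qP_deg (d : ℕ) (s : ℕ → ℂ) : (qP d s).natDegree ≤ d - 1 := by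
  apply Polynomial.natDegree_sum_le_of_forall_le
  intro j hj
  have hj' := Finset.mem_range.mp hj
  refine (Polynomial.natDegree_C_mul_le _ _).trans ?_
  rw [Polynomial.natDegree_X_pow]; omega

lemma sum_deg (d : ℕ) (s : ℕ → ℂ) (c : ℕ → ℂ) :
    (∑ j ∈ Finset.range d, Polynomial.C (c j) * (pP d s) ^ j *
      (qP d s) ^ (d - 1 - j)).natDegree ≤ (d - 1) ^ 2 := by
  apply Polynomial.natDegree_sum_le_of_forall_le
  intro j hj
  have hj' := Finset.mem_range.mp hj
  have h1 : ((pP d s) ^ j).natDegree ≤ j * (d - 1) :=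
    Polynomial.natDegree_pow_le.trans (Nat.mul_le_mul_left _ (pP_deg d s))
  have h2 : ((qP d s) ^ (d - 1 - j)).natDegree ≤ (d - 1 - j) * (d - 1) :=
    Polynomial.natDegree_pow_le.trans (Nat.mul_le_mul_left _ (qP_deg d s))
  calc (Polynomial.C (c j) * (pP d s) ^ j * (qP d s) ^ (d - 1 - j)).natDegree
      ≤ (Polynomial.C (c j) * (pP d s) ^ j).natDegree +
        ((qP d s) ^ (d - 1 - j)).natDegree := Polynomial.natDegree_mul_le
    _ ≤ j * (d - 1) + (d - 1 - j) * (d - 1) :=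
        Nat.add_le_add ((Polynomial.natDegree_C_mul_le _ _).trans h1) h2
    _ = (j + (d - 1 - j)) * (d - 1) := by rw [add_mul]
    _ ≤ (d - 1) * (d - 1) := by
        apply Nat.mul_le_mul_right; omega
    _ = (d - 1) ^ 2 := (sq _).symm

/-- If `q ≠ 0`, the polynomial `z v(z) - u(z)` has degree at most `(d-1)² + 1` and every
nonzero anti-fixed point of `F` with `x₁ ≠ 0` yields a root `z = x₂/x₁` of it
with `v(z) ≠ 0`. -/
theorem stmt12 (d : ℕ) (hd : 3 ≤ d) (s : ℕ → ℂ) (hq : qP d s ≠ 0) :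
    (Polynomial.X * vP d s - uP d s).natDegree ≤ (d - 1) ^ 2 + 1 ∧
    ∀ x₁ x₂ : ℂ, x₁ ≠ 0 →
      F1 d s x₁ x₂ = (starRingEnd ℂ) x₁ → F2 d s x₁ x₂ = (starRingEnd ℂ) x₂ →
      (Polynomial.X * vP d s - uP d s).eval (x₂ / x₁) = 0 ∧
      (vP d s).eval (x₂ / x₁) ≠ 0 := by
  constructor
  · have hu : (uP d s).natDegree ≤ (d - 1) ^ 2 := sum_deg d s _
    have hv : (vP d s).natDegree ≤ (d - 1) ^ 2 := sum_deg d s _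
    refine (Polynomial.natDegree_sub_le _ _).trans (max_le ?_ (by omega))
    refine Polynomial.natDegree_mul_le.trans ?_
    have := Polynomial.natDegree_X_le (R := ℂ)
    omega
  · intro x₁ x₂ hx₁ h1 h2
    set z : ℂ := x₂ / x₁ with hz
    have hB : x₁ ^ (d - 1) * (qP d s).eval z = (starRingEnd ℂ) x₁ := by
      rw [hz, qP, gen_eval d _ x₁ x₂ hx₁, ← h1, F1]
    have hA : x₁ ^ (d - 1) * (pP d s).eval z = (starRingEnd ℂ) x₂ := by
      rw [hz, pP, gen_eval d _ x₁ x₂ hx₁, ← h2, F2]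
    have hV : (x₁ ^ (d - 1)) ^ (d - 1) * (vP d s).eval z = x₁ := by
      rw [vP, gen2 d _ _ _ z _ _ _ hA hB]
      have : ∑ j ∈ Finset.range d, ((d - 1).choose j : ℂ) * (starRingEnd ℂ) (s j) *
          ((starRingEnd ℂ) x₂) ^ j * ((starRingEnd ℂ) x₁) ^ (d - 1 - j) =
          (starRingEnd ℂ) (F1 d s x₁ x₂) := by
        rw [F1, map_sum]
        refine Finset.sum_congr rfl fun j _ => ?_
        simp only [map_mul, map_pow, map_natCast]
        ring
      rw [this, h1, Complex.conj_conj]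
    have hU : (x₁ ^ (d - 1)) ^ (d - 1) * (uP d s).eval z = x₂ := by
      rw [uP, gen2 d _ _ _ z _ _ _ hA hB]
      have : ∑ j ∈ Finset.range d, ((d - 1).choose j : ℂ) * (starRingEnd ℂ) (s (j + 1)) *
          ((starRingEnd ℂ) x₂) ^ j * ((starRingEnd ℂ) x₁) ^ (d - 1 - j) =
          (starRingEnd ℂ) (F2 d s x₁ x₂) := by
        rw [F2, map_sum]
        refine Finset.sum_congr rfl fun j _ => ?_
        simp only [map_mul, map_pow, map_natCast]
        ring
      rw [this, h2, Complex.conj_conj]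
    have hw : (x₁ ^ (d - 1)) ^ (d - 1) ≠ 0 := pow_ne_zero _ (pow_ne_zero _ hx₁)
    constructor
    · have key : (x₁ ^ (d - 1)) ^ (d - 1) * (Polynomial.X * vP d s - uP d s).eval z = 0 := by
        rw [Polynomial.eval_sub, Polynomial.eval_mul, Polynomial.eval_X, mul_sub]
        rw [show (x₁ ^ (d - 1)) ^ (d - 1) * (z * (vP d s).eval z)
            = z * ((x₁ ^ (d - 1)) ^ (d - 1) * (vP d s).eval z) by ring, hV, hU, hz]
        field_simp
        ring
      exact (mul_eq_zero.mp key).resolve_left hw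
    · intro hcon
      rw [hcon, mul_zero] at hV
      exact hx₁ hV.symm

end
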